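/- Let F be a cyclic Minkowski norm on a finite-dimensional real Lie algebra g with spray vector field η, connection operator N (with N differentiable in its first variable), and associated Riemann curvature R_y. If g_y(R_y(u),u) = 0 for all y ∈ g∖{0} and all u ∈ g, then c(g) + [g,g] = g, where c(g) is the center of g and [g,g] the derived subalgebra. -/

import Mathlib

noncomputable section

/-- The fundamental tensor `g_y(u,v) = (1/2)·∂²/∂s∂t|_{s=t=0} F(y+su+tv)²`. -/
def gTensor {V : Type*} [NormedAddCommGroup V] [NormedSpace ℝ V]
    (F : V → ℝ) (y u v : V) : ℝ :=
  (1 / 2) * deriv (fun s : ℝ => deriv (fun t : ℝ => (F (y + s • u + t • v)) ^ 2) 0) 0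

/-- The Cartan tensor `C_y(u,v,w) = (1/2)·d/dt|_{t=0} g_{y+tw}(u,v)`. -/
def cartanTensor {V : Type*} [NormedAddCommGroup V] [NormedSpace ℝ V]
    (F : V → ℝ) (y u v w : V) : ℝ :=
  (1 / 2) * deriv (fun t : ℝ => gTensor F (y + t • w) u v) 0

/-- `F` is a Minkowski norm: positive and smooth away from `0`, positively
homogeneous of degree one, with positive-definite symmetric bilinear fundamental tensor. -/
structure IsMinkowskiNorm {V : Type*} [NormedAddCommGroup V] [NormedSpace ℝ V]
    (F : V → ℝ) : Prop where
  pos : ∀ y : V, y ≠ 0 → 0 < F y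
  smooth : ContDiffOn ℝ (⊤ : ℕ∞) F {(0 : V)}ᶜ
  homog : ∀ c : ℝ, 0 < c → ∀ y : V, F (c • y) = c * F y
  g_symm : ∀ y : V, y ≠ 0 → ∀ u v : V, gTensor F y u v = gTensor F y v u
  g_add_left : ∀ y : V, y ≠ 0 → ∀ u u' v : V,
    gTensor F y (u + u') v = gTensor F y u v + gTensor F y u' v
  g_smul_left : ∀ y : V, y ≠ 0 → ∀ (c : ℝ) (u v : V),
    gTensor F y (c • u) v = c * gTensor F y u v
  g_posdef : ∀ y : V, y ≠ 0 → ∀ u : V, u ≠ 0 → 0 < gTensor F y u u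

/-- A Lie algebra structure on the real vector space `V`, given as a bilinear map. -/
structure IsLieBracket {V : Type*} [AddCommGroup V] [Module ℝ V]
    (L : V →ₗ[ℝ] V →ₗ[ℝ] V) : Prop where
  alternate : ∀ x : V, L x x = 0
  jacobi : ∀ x y z : V, L x (L y z) = L (L x y) z + L y (L x z)

/-- The cyclic condition for a Minkowski norm on a Lie algebra. -/
def IsCyclicNorm {V : Type*} [NormedAddCommGroup V] [NormedSpace ℝ V]
    (L : V →ₗ[ℝ] V →ₗ[ℝ] V) (F : V → ℝ) : Prop :=
  ∀ y : V, y ≠ 0 → ∀ x z : V,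
    gTensor F y (L x y) z + gTensor F y (L y z) x + gTensor F y (L z x) y = 0

/-- The Riemann curvature `R_y(u) = D_η N(y,u) − N(y,N(y,u)) + N(y,[y,u]) − [y,N(y,u)]`. -/
def RiemannCurv {V : Type*} [NormedAddCommGroup V] [NormedSpace ℝ V]
    (L : V →ₗ[ℝ] V →ₗ[ℝ] V) (η : V → V) (N : V → V → V) (y u : V) : V :=
  fderiv ℝ (fun z => N z u) y (η y) - N y (N y u) + N y (L y u) - L y (N y u)

/-- Projection onto `m` along `h` in the decomposition `g = h ⊕ m`. -/
def projTo {V : Type*} [AddCommGroup V] [Module ℝ V] (h m : Submodule ℝ V)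
    (hcompl : IsCompl h m) : V →ₗ[ℝ] m :=
  m.linearProjOfIsCompl h hcompl.symm

/-- The inner product making the basis `e` orthonormal. -/
def basisInner {V : Type*} [AddCommGroup V] [Module ℝ V] {ι : Type*} [Fintype ι]
    (e : Module.Basis ι ℝ V) (x y : V) : ℝ :=
  ∑ k, e.repr x k * e.repr y k


/-- The center `c(g) = {x : [x,v] = 0 ∀ v}` of the Lie bracket `L`. -/
def centerOf {V : Type*} [AddCommGroup V] [Module ℝ V]
    (L : V →ₗ[ℝ] V →ₗ[ℝ] V) : Submodule ℝ V where
  carrier := {x | ∀ v : V, L x v = 0}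
  add_mem' := by
    intro a b ha hb v
    simp [map_add, ha v, hb v]
  zero_mem' := by
    intro v
    simp
  smul_mem' := by
    intro c a ha v
    simp [map_smul, ha v]

/-- The derived subalgebra `[g,g]` (the span of all brackets) of the Lie bracket `L`. -/
def derivedOf {V : Type*} [AddCommGroup V] [Module ℝ V]
    (L : V →ₗ[ℝ] V →ₗ[ℝ] V) : Submodule ℝ V :=
  Submodule.span ℝ {z | ∃ x y : V, z = L x y}

section Helpers
-- helpers
variable {V : Type*} [NormedAddCommGroup V] [NormedSpace ℝ V] {F : V → ℝ}

lemma IsMinkowskiNorm.diffAt (hF : IsMinkowskiNorm F) {y : V} (hy : y ≠ 0) :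
    DifferentiableAt ℝ F y := by
  have h := (hF.smooth y hy).contDiffAt (isOpen_compl_singleton.mem_nhds hy)
  exact h.differentiableAt (by simp)

lemma sq_line_diffAt (hF : IsMinkowskiNorm F) {y : V} (hy : y ≠ 0) (v : V) :
    DifferentiableAt ℝ (fun t : ℝ => (F (y + t • v)) ^ 2) 0 := by
  have hline : DifferentiableAt ℝ (fun t : ℝ => y + t • v) 0 :=
    (differentiableAt_const y).add (differentiableAt_id.smul_const v)
  have hFy : DifferentiableAt ℝ F (y + (0:ℝ) • v) := by
    simpa using hF.diffAt hy
  exact (hFy.comp 0 hline).pow 2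

/-- Euler's relation: `g_y(y,v) = (1/2) d/dt|₀ F(y+tv)²`. -/
lemma gTensor_self_eq (hF : IsMinkowskiNorm F) {y : V} (hy : y ≠ 0) (v : V) :
    gTensor F y y v = (1 / 2) * deriv (fun t : ℝ => (F (y + t • v)) ^ 2) 0 := by
  set φ : ℝ → ℝ := fun t => (F (y + t • v)) ^ 2 with hφdef
  have hφ : DifferentiableAt ℝ φ 0 := sq_line_diffAt hF hy v
  set c : ℝ := deriv φ 0 with hc
  have key : ∀ s ∈ Set.Ioo (-1 : ℝ) 1,
      deriv (fun t : ℝ => (F (y + s • y + t • v)) ^ 2) 0 = (1 + s) * c := by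
    intro s hs
    have hs1 : (0:ℝ) < 1 + s := by linarith [hs.1]
    have hs0 : (1 + s) ≠ 0 := ne_of_gt hs1
    have hfun : (fun t : ℝ => (F (y + s • y + t • v)) ^ 2)
        = fun t : ℝ => (1 + s) ^ 2 * φ ((1 + s)⁻¹ * t) := by
      funext t
      have hvec : y + s • y + t • v = (1 + s) • (y + ((1 + s)⁻¹ * t) • v) := by
        rw [smul_add, add_smul, one_smul, smul_smul, mul_inv_cancel_left₀ hs0]
      rw [hvec, hF.homog (1 + s) hs1]; simp only [hφdef]; ring
    rw [hfun]
    have hinner : HasDerivAt (fun t : ℝ => (1 + s)⁻¹ * t) ((1 + s)⁻¹) 0 := by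
      simpa using (hasDerivAt_id (0:ℝ)).const_mul ((1 + s)⁻¹)
    have hφ0 : HasDerivAt φ c ((1 + s)⁻¹ * 0) := by
      rw [mul_zero]; exact hφ.hasDerivAt
    have hcomp : HasDerivAt (fun t : ℝ => φ ((1 + s)⁻¹ * t)) (c * (1 + s)⁻¹) 0 :=
      HasDerivAt.comp 0 hφ0 hinner
    have := (hcomp.const_mul ((1 + s) ^ 2)).deriv
    rw [this]
    field_simp
  have hev : (fun s : ℝ => deriv (fun t : ℝ => (F (y + s • y + t • v)) ^ 2) 0)
      =ᶠ[nhds (0:ℝ)] fun s => (1 + s) * c := by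
    filter_upwards [Ioo_mem_nhds (by norm_num : (-1:ℝ) < 0) (by norm_num : (0:ℝ) < 1)]
      with s hs using key s hs
  have hderiv : deriv (fun s : ℝ => (1 + s) * c) 0 = c := by
    have : HasDerivAt (fun s : ℝ => (1 + s) * c) (1 * c) 0 :=
      (((hasDerivAt_id (0:ℝ)).const_add 1)).mul_const c
    rw [this.deriv, one_mul]
  rw [gTensor, hev.deriv_eq, hderiv]

lemma gTensor_zero_left (hF : IsMinkowskiNorm F) {y : V} (hy : y ≠ 0) (v : V) :
    gTensor F y 0 v = 0 := by
  have := hF.g_smul_left y hy 0 0 v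
  simpa using this

lemma gTensor_neg_left (hF : IsMinkowskiNorm F) {y : V} (hy : y ≠ 0) (u v : V) :
    gTensor F y (-u) v = -gTensor F y u v := by
  have := hF.g_smul_left y hy (-1) u v
  simpa using this

lemma gTensor_sub_left (hF : IsMinkowskiNorm F) {y : V} (hy : y ≠ 0) (u u' v : V) :
    gTensor F y (u - u') v = gTensor F y u v - gTensor F y u' v := by
  rw [sub_eq_add_neg, hF.g_add_left y hy, gTensor_neg_left hF hy, sub_eq_add_neg]

lemma gTensor_eq_zero_iff (hF : IsMinkowskiNorm F) {y : V} (hy : y ≠ 0) {w : V}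
    (h : gTensor F y w w = 0) : w = 0 := by
  by_contra hw
  exact absurd h (ne_of_gt (hF.g_posdef y hy w hw))

lemma gTensor_eq_of_forall (hF : IsMinkowskiNorm F) {y : V} (hy : y ≠ 0) {a b : V}
    (h : ∀ u : V, gTensor F y a u = gTensor F y b u) : a = b := by
  have h1 : gTensor F y (a - b) (a - b) = 0 := by
    rw [gTensor_sub_left hF hy, h (a - b), sub_self]
  have := gTensor_eq_zero_iff hF hy h1
  exact sub_eq_zero.mp this

end Helpers

/-- For a Finsler cyclic Lie group with flag curvature `K ≡ 0`,
one has `c(g) + [g,g] = g`. -/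
theorem flat_cyclic_center_add_derived_eq_top
    {g : Type*} [NormedAddCommGroup g] [NormedSpace ℝ g] [FiniteDimensional ℝ g]
    (L : g →ₗ[ℝ] g →ₗ[ℝ] g) (hL : IsLieBracket L)
    (F : g → ℝ) (hF : IsMinkowskiNorm F) (hcyc : IsCyclicNorm L F)
    (η : g → g) (N : g → g → g)
    (hη : ∀ y : g, y ≠ 0 → ∀ u : g, gTensor F y (η y) u = gTensor F y y (L u y))
    (hN : ∀ y : g, y ≠ 0 → ∀ u v : g,
      2 * gTensor F y (N y v) u =
        gTensor F y (L u v) y + gTensor F y (L u y) v + gTensor F y (L v y) u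
          - 2 * cartanTensor F y u v (η y))
    (hNdiff : ∀ u : g, DifferentiableOn ℝ (fun z => N z u) {(0 : g)}ᶜ)
    (hflat : ∀ y : g, y ≠ 0 → ∀ u : g, gTensor F y (RiemannCurv L η N y u) u = 0) :
    centerOf L ⊔ derivedOf L = ⊤ := by
  by_contra hne
  obtain ⟨y0, hy0⟩ : ∃ y0 : g, y0 ∉ centerOf L ⊔ derivedOf L := by
    by_contra h; push_neg at h; exact hne (Submodule.eq_top_iff'.2 h)
  set D := derivedOf L with hD
  have hDmem : ∀ u v : g, L u v ∈ D := fun u v => Submodule.subset_span ⟨u, v, rfl⟩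
  have hy0D : y0 ∉ D := fun h => hy0 (Submodule.mem_sup_right h)
  have hy0ne : y0 ≠ 0 := by rintro rfl; exact hy0D D.zero_mem
  have hFc : ContinuousOn F {(0:g)}ᶜ := hF.smooth.continuousOn
  -- positive lower bound for F via the unit sphere
  have hsub : Metric.sphere (0:g) 1 ⊆ {(0:g)}ᶜ := by
    intro x hx h0
    rw [mem_sphere_zero_iff_norm] at hx
    rw [Set.mem_singleton_iff] at h0
    rw [h0, norm_zero] at hx; norm_num at hx
  have hnsph : (Metric.sphere (0:g) 1).Nonempty := by
    refine ⟨‖y0‖⁻¹ • y0, ?_⟩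
    rw [mem_sphere_zero_iff_norm, norm_smul, norm_inv, norm_norm,
      inv_mul_cancel₀ (norm_ne_zero_iff.2 hy0ne)]
  obtain ⟨xm, hxm, hxmin⟩ := (isCompact_sphere (0:g) 1).exists_isMinOn hnsph (hFc.mono hsub)
  set m := F xm with hm
  have hmpos : 0 < m := hF.pos xm (fun h => hsub hxm h)
  have hlow : ∀ x : g, x ≠ 0 → m * ‖x‖ ≤ F x := by
    intro x hx
    have hnx : (0:ℝ) < ‖x‖ := norm_pos_iff.2 hx
    have hmem : ‖x‖⁻¹ • x ∈ Metric.sphere (0:g) 1 := by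
      rw [mem_sphere_zero_iff_norm, norm_smul, norm_inv, norm_norm,
        inv_mul_cancel₀ (ne_of_gt hnx)]
    have h1 : F x = ‖x‖ * F (‖x‖⁻¹ • x) := by
      rw [← hF.homog ‖x‖ hnx (‖x‖⁻¹ • x), smul_smul, mul_inv_cancel₀ (ne_of_gt hnx), one_smul]
    have h2 : m ≤ F (‖x‖⁻¹ • x) := hxmin hmem
    rw [h1]
    calc m * ‖x‖ = ‖x‖ * m := by ring
    _ ≤ ‖x‖ * F (‖x‖⁻¹ • x) := by
        exact mul_le_mul_of_nonneg_left h2 (le_of_lt hnx)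
  -- the affine set and the compact piece
  set T : Set g := {x : g | x - y0 ∈ D} with hT
  have hTclosed : IsClosed T := by
    have hDc : IsClosed (D : Set g) := Submodule.closed_of_finiteDimensional D
    exact hDc.preimage (continuous_id.sub continuous_const)
  have hTne0 : ∀ x ∈ T, x ≠ 0 := by
    intro x hx h0
    rw [h0] at hx
    have : (0:g) - y0 ∈ D := hx
    rw [zero_sub] at this
    exact hy0D (by simpa using D.neg_mem this)
  set R := m⁻¹ * F y0 + 1 with hR
  have hy0norm : ‖y0‖ ≤ m⁻¹ * F y0 := by
    have := hlow y0 hy0ne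
    rw [le_inv_mul_iff₀ hmpos]; linarith
  set K := T ∩ Metric.closedBall (0:g) R with hK
  have hKc : IsCompact K :=
    (isCompact_closedBall (0:g) R).inter_left hTclosed
  have hy0K : y0 ∈ K := by
    constructor
    · show y0 - y0 ∈ D; rw [sub_self]; exact D.zero_mem
    · rw [Metric.mem_closedBall, dist_zero_right, hR]; linarith
  have hKsub : K ⊆ {(0:g)}ᶜ := fun x hx => hTne0 x hx.1
  obtain ⟨y, hyK, hymin⟩ := hKc.exists_isMinOn ⟨y0, hy0K⟩ (hFc.mono hKsub)
  have hyT : y ∈ T := hyK.1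
  have hyne : y ≠ 0 := hTne0 y hyT
  -- global minimality on T
  have hMin : ∀ z ∈ T, F y ≤ F z := by
    intro z hz
    by_cases hzB : z ∈ Metric.closedBall (0:g) R
    · exact hymin ⟨hz, hzB⟩
    · have hzne : z ≠ 0 := hTne0 z hz
      have h1 : m * ‖z‖ ≤ F z := hlow z hzne
      have h2 : R < ‖z‖ := by
        rw [Metric.mem_closedBall, dist_zero_right, not_le] at hzB; exact hzB
      have h3 : F y ≤ F y0 := hymin hy0K
      have h4 : m * R = F y0 + m := by
        rw [hR]; field_simp
      nlinarith [mul_lt_mul_of_pos_left h2 hmpos]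
  -- first variation: y is g_y-orthogonal to D
  have hperp : ∀ v ∈ D, gTensor F y y v = 0 := by
    intro v hv
    have hline : ∀ t : ℝ, y + t • v ∈ T := by
      intro t
      show y + t • v - y0 ∈ D
      have h0 : y + t • v - y0 = (y - y0) + t • v := by abel
      rw [h0]
      exact D.add_mem hyT (D.smul_mem t hv)
    have hlmin : IsLocalMin (fun t : ℝ => (F (y + t • v)) ^ 2) 0 := by
      apply Filter.Eventually.of_forall
      intro t
      have hle : F (y + (0:ℝ) • v) ≤ F (y + t • v) := by
        rw [zero_smul, add_zero]
        exact hMin _ (hline t)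
      have h0 : (0:ℝ) ≤ F (y + (0:ℝ) • v) := by
        rw [zero_smul, add_zero]; exact (hF.pos y hyne).le
      exact pow_le_pow_left₀ h0 hle 2
    rw [gTensor_self_eq hF hyne v, hlmin.deriv_eq_zero, mul_zero]
  have hsymm := hF.g_symm y hyne
  have hgy : ∀ v ∈ D, gTensor F y v y = 0 := fun v hv => by
    rw [hsymm v y]; exact hperp v hv
  -- spray vanishes
  have hη0 : η y = 0 := by
    have h1 : ∀ u : g, gTensor F y (η y) u = 0 := fun u => by
      rw [hη y hyne u]; exact hperp (L u y) (hDmem u y)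
    by_contra h
    exact absurd (h1 (η y)) (ne_of_gt (hF.g_posdef y hyne (η y) h))
  -- Cartan term vanishes
  have hC0 : ∀ u v : g, cartanTensor F y u v (η y) = 0 := by
    intro u v
    rw [hη0, cartanTensor]
    simp
  -- skew-symmetry of the bracket
  have hskew : ∀ a b : g, L a b = - L b a := by
    intro a b
    have h := hL.alternate (a + b)
    simp only [map_add, LinearMap.add_apply, hL.alternate a, hL.alternate b,
      zero_add, add_zero] at h
    rw [add_comm] at h
    exact eq_neg_of_add_eq_zero_left h
  -- A := L · y is g_y-symmetric (cyclicity + orthogonality)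
  have hA : ∀ x z : g, gTensor F y (L x y) z = gTensor F y (L z y) x := by
    intro x z
    have hc := hcyc y hyne x z
    have h3 : gTensor F y (L z x) y = 0 := hgy _ (hDmem z x)
    have h2 : gTensor F y (L y z) x = - gTensor F y (L z y) x := by
      rw [hskew y z, gTensor_neg_left hF hyne]
    linarith
  -- connection operator on the fiber over y
  have hNval : ∀ v : g, N y v = L v y := by
    intro v
    apply gTensor_eq_of_forall hF hyne
    intro u
    have h := hN y hyne u v
    rw [hC0 u v] at h
    have h1 : gTensor F y (L u v) y = 0 := hgy _ (hDmem u v)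
    have h2 : gTensor F y (L u y) v = gTensor F y (L v y) u := hA u v
    linarith
  -- flatness forces L u y = 0
  have hAz : ∀ u : g, L u y = 0 := by
    intro u
    have hR0 := hflat y hyne u
    have hfd : fderiv ℝ (fun z => N z u) y (η y) = 0 := by
      rw [hη0]; exact (fderiv ℝ (fun z => N z u) y).map_zero
    have hcurv : RiemannCurv L η N y u = - L (L u y) y := by
      rw [RiemannCurv, hfd, hNval u, hNval (L u y), hNval (L y u)]
      rw [hskew y u, map_neg, hskew y (L u y)]
      simp only [LinearMap.neg_apply]
      abel
    rw [hcurv, gTensor_neg_left hF hyne] at hR0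
    have h1 : gTensor F y (L (L u y) y) u = 0 := by linarith
    have h2 : gTensor F y (L u y) (L u y) = 0 := by
      rw [← hA (L u y) u]; exact h1
    exact gTensor_eq_zero_iff hF hyne h2
  -- y is central
  have hyC : y ∈ centerOf L := by
    show ∀ v : g, L y v = 0
    intro v
    rw [hskew y v, hAz v, neg_zero]
  -- contradiction
  apply hy0
  have h1 : y ∈ centerOf L ⊔ D := Submodule.mem_sup_left hyC
  have h2 : y - y0 ∈ centerOf L ⊔ D := Submodule.mem_sup_right hyT
  have h3 : y0 = y - (y - y0) := by abel
  rw [hD] at h1 h2 ⊢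
  rw [h3]
  exact Submodule.sub_mem _ h1 h2

end
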